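/- For every natural number r ≥ 2, the kernel of the endomorphism of F_r = ℂ[α,β,γ]/J_r given by multiplication by (the class of) γ² equals the image of the ideal J_{r−2} under the quotient map ℂ[α,β,γ] → F_r. -/

import Mathlib

open MvPolynomial

/-- The triple (R¹_r, R²_r, R³_r) of polynomials in ℂ[α,β,γ] (α = X 0, β = X 1, γ = X 2). -/
noncomputable def Rr : ℕ → MvPolynomial (Fin 3) ℂ × MvPolynomial (Fin 3) ℂ × MvPolynomial (Fin 3) ℂ
  | 0 => (1, 0, 0)
  | (r + 1) =>
      (X 0 * (Rr r).1 + C ((r : ℂ) ^ 2) * (Rr r).2.1,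
       (X 1 + C ((-1 : ℂ) ^ (r + 1) * 8)) * (Rr r).1 + C ((2 * r : ℂ) / (r + 1)) * (Rr r).2.2,
       X 2 * (Rr r).1)

/-- The ideal J_r = (R¹_r, R²_r, R³_r) ⊆ ℂ[α,β,γ]. -/
noncomputable def Jr (r : ℕ) : Ideal (MvPolynomial (Fin 3) ℂ) :=
  Ideal.span {(Rr r).1, (Rr r).2.1, (Rr r).2.2}

namespace Stmt12

abbrev P := MvPolynomial (Fin 3) ℂ
abbrev B := Polynomial (Polynomial ℂ)

/-- γ ↦ 0 specialization, landing in ℂ[β][α]. -/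
noncomputable def φ : P →ₐ[ℂ] B :=
  MvPolynomial.aeval ![Polynomial.X, Polynomial.C Polynomial.X, 0]

/-- The inclusion ℂ[β][α] → ℂ[α,β,γ]. -/
noncomputable def ι : B →+* P :=
  Polynomial.eval₂RingHom (Polynomial.eval₂RingHom (MvPolynomial.C) (X 1)) (X 0)

@[simp] lemma φ_X0 : φ (X 0) = Polynomial.X := by simp [φ]
@[simp] lemma φ_X1 : φ (X 1) = Polynomial.C Polynomial.X := by simp [φ]
@[simp] lemma φ_X2 : φ (X 2) = 0 := by simp [φ]
@[simp] lemma φ_C (c : ℂ) : φ (C c) = Polynomial.C (Polynomial.C c) := by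
  simp [φ, algebraMap_eq]

@[simp] lemma ι_X : ι Polynomial.X = X 0 := by simp [ι]
@[simp] lemma ι_CX : ι (Polynomial.C Polynomial.X) = X 1 := by simp [ι]
@[simp] lemma ι_CC (c : ℂ) : ι (Polynomial.C (Polynomial.C c)) = C c := by simp [ι]

lemma φ_ι (b : B) : φ (ι b) = b := by
  have : (φ.toRingHom.comp ι) = RingHom.id B := by
    apply Polynomial.ringHom_ext'
    · apply Polynomial.ringHom_ext <;> simp
    · simp
  exact congrArg (· b) this |>.trans rfl


lemma sub_ι_φ_mem (w : P) : w - ι (φ w) ∈ Ideal.span {(X 2 : P)} := by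
  induction w using MvPolynomial.induction_on with
  | C a => simp
  | add p q hp hq =>
      rw [map_add, map_add]
      have : p + q - (ι (φ p) + ι (φ q)) = (p - ι (φ p)) + (q - ι (φ q)) := by ring
      rw [this]; exact Ideal.add_mem _ hp hq
  | mul_X p i hp =>
      rw [map_mul, map_mul]
      have : p * X i - ι (φ p) * ι (φ (X i))
          = (p - ι (φ p)) * X i + ι (φ p) * (X i - ι (φ (X i))) := by ring
      rw [this]
      refine Ideal.add_mem _ (Ideal.mul_mem_right _ _ hp) ?_
      fin_cases i <;>
        simp [Ideal.mem_span_singleton]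

lemma eq_X2_mul_of_φ_eq_zero {w : P} (h : φ w = 0) : ∃ t, w = X 2 * t := by
  have := sub_ι_φ_mem w
  rw [h, map_zero, sub_zero, Ideal.mem_span_singleton] at this
  obtain ⟨t, ht⟩ := this
  exact ⟨t, ht⟩


lemma Rr1_succ (r : ℕ) : (Rr (r+1)).1 = X 0 * (Rr r).1 + C ((r : ℂ) ^ 2) * (Rr r).2.1 := rfl
lemma Rr2_succ (r : ℕ) : (Rr (r+1)).2.1
    = (X 1 + C ((-1 : ℂ) ^ (r + 1) * 8)) * (Rr r).1 + C ((2 * r : ℂ) / (r + 1)) * (Rr r).2.2 := rfl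
lemma Rr3_succ (r : ℕ) : (Rr (r+1)).2.2 = X 2 * (Rr r).1 := rfl

noncomputable def q1 (s : ℕ) : B := φ (Rr s).1
noncomputable def q2 (s : ℕ) : B := φ (Rr s).2.1

/-- The constant (in α) polynomial β + (−1)^k 8 inside ℂ[β][α]. -/
noncomputable def bb (k : ℕ) : B := Polynomial.C (Polynomial.X + Polynomial.C ((-1 : ℂ)^k * 8))

lemma bb_def (k : ℕ) : bb k = Polynomial.C (Polynomial.X + Polynomial.C ((-1 : ℂ)^k * 8)) := rfl

lemma degree_C_mul_le (a : Polynomial ℂ) (p : B) : (Polynomial.C a * p).degree ≤ p.degree :=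
  calc (Polynomial.C a * p).degree ≤ (Polynomial.C a).degree + p.degree :=
        Polynomial.degree_mul_le _ _
  _ ≤ 0 + p.degree := add_le_add Polynomial.degree_C_le le_rfl
  _ = p.degree := zero_add _

@[simp] lemma φ_R3 (s : ℕ) : φ (Rr s).2.2 = 0 := by
  cases s with
  | zero => show φ 0 = 0; simp
  | succ t => rw [Rr3_succ, map_mul, φ_X2, zero_mul]

@[simp] lemma q1_zero : q1 0 = 1 := by show φ 1 = 1; simp
@[simp] lemma q2_zero : q2 0 = 0 := by show φ 0 = 0; simp

lemma q1_succ (s : ℕ) :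
    q1 (s+1) = Polynomial.X * q1 s + Polynomial.C (Polynomial.C ((s : ℂ)^2)) * q2 s := by
  show φ _ = _
  rw [Rr1_succ, map_add, map_mul, map_mul, φ_X0, φ_C]; rfl

lemma q2_succ (s : ℕ) : q2 (s+1) = bb (s+1) * q1 s := by
  show φ _ = _
  rw [Rr2_succ, bb_def, Polynomial.C_add]
  generalize (-1 : ℂ)^(s+1) * 8 = c
  rw [show ((X 1 + C c) : P) * (Rr s).1 + C ((2 * s : ℂ) / (s + 1)) * (Rr s).2.2
      = X 1 * (Rr s).1 + C c * (Rr s).1 + C ((2 * s : ℂ) / (s + 1)) * (Rr s).2.2 from by ring]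
  rw [map_add, map_add, map_mul, map_mul, map_mul, φ_R3, mul_zero, add_zero, φ_X1, φ_C]
  unfold q1; ring

@[simp] lemma q1_one : q1 1 = Polynomial.X := by simp [q1_succ]

lemma q1_monic_deg (s : ℕ) : (q1 s).Monic ∧ (q1 s).degree = s := by
  induction s using Nat.strong_induction_on with
  | _ s ih =>
    match s with
    | 0 => simpa using ⟨Polynomial.monic_one, Polynomial.degree_one⟩
    | 1 => simpa using Polynomial.degree_X
    | (t+2) =>
      obtain ⟨hm, hd⟩ := ih (t+1) (by omega)
      obtain ⟨hm0, hd0⟩ := ih t (by omega)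
      rw [q1_succ (t+1), q2_succ t]
      have hmul : (Polynomial.X * q1 (t+1)).Monic := Polynomial.monic_X.mul hm
      have hdmul : (Polynomial.X * q1 (t+1)).degree = ((t+2 : ℕ) : WithBot ℕ) := by
        rw [Polynomial.degree_mul, Polynomial.degree_X, hd]
        exact_mod_cast (by omega : 1 + (t+1) = t+2)
      have hlt : (Polynomial.C (Polynomial.C (((t+1 : ℕ) : ℂ)^2)) * (bb (t+1) * q1 t)).degree
          < (Polynomial.X * q1 (t+1)).degree := by
        rw [hdmul]
        calc _ ≤ (bb (t+1) * q1 t).degree := degree_C_mul_le _ _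
        _ ≤ (q1 t).degree := by rw [bb_def]; exact degree_C_mul_le _ _
        _ = (t : WithBot ℕ) := hd0
        _ < ((t+2 : ℕ) : WithBot ℕ) := by exact_mod_cast by omega
      have hlt' : (Polynomial.C (Polynomial.C ((((t+1) : ℕ) : ℂ)^2)) * (bb (t+1) * q1 t)).degree
          < (Polynomial.X * q1 (t+1)).degree := hlt
      exact ⟨hmul.add_of_left hlt', by
        rw [Polynomial.degree_add_eq_left_of_degree_lt hlt', hdmul]⟩

lemma q1_monic (s : ℕ) : (q1 s).Monic := (q1_monic_deg s).1
lemma q1_ne_zero (s : ℕ) : q1 s ≠ 0 := (q1_monic s).ne_zero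

lemma not_C_linear_dvd_q1 (s : ℕ) (c : ℂ) :
    ¬ (Polynomial.C (Polynomial.X + Polynomial.C c) ∣ q1 s) := by
  rintro ⟨g, hg⟩
  have h0 : ((q1 s).map (Polynomial.evalRingHom (-c))) = 0 := by
    rw [hg, Polynomial.map_mul, Polynomial.map_C]
    simp
  exact ((q1_monic s).map (Polynomial.evalRingHom (-c))).ne_zero h0


/-- Coefficient of the three-term recurrence for q1. -/
noncomputable def E (k : ℕ) : B := Polynomial.C (Polynomial.C ((k : ℂ)^2)) * bb k

lemma q1_rec (s : ℕ) : q1 (s+2) = Polynomial.X * q1 (s+1) + E (s+1) * q1 s := by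
  rw [q1_succ (s+1), q2_succ s, E, mul_assoc]

/-- The companion solution of the recurrence. -/
noncomputable def qt : ℕ → B
  | 0 => 0
  | 1 => 1
  | (s+2) => Polynomial.X * qt (s+1) + E (s+1) * qt s

/-- The Casoratian values. -/
noncomputable def dd : ℕ → Polynomial ℂ
  | 0 => -1
  | (s+1) => -(Polynomial.C (((s+1 : ℕ) : ℂ)^2)
      * (Polynomial.X + Polynomial.C ((-1 : ℂ)^(s+1) * 8)) * dd s)

lemma dd_ne_zero : ∀ s, dd s ≠ 0
  | 0 => by simp [dd]
  | (s+1) => by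
      have h1 : (Polynomial.C (((s+1 : ℕ) : ℂ)^2)) ≠ 0 :=
        Polynomial.C_ne_zero.mpr (pow_ne_zero _ (Nat.cast_ne_zero.mpr (Nat.succ_ne_zero s)))
      have h2 : (Polynomial.X + Polynomial.C ((-1 : ℂ)^(s+1) * 8)) ≠ 0 :=
        (Polynomial.monic_X_add_C _).ne_zero
      have h3 := dd_ne_zero s
      simp only [dd, ne_eq, neg_eq_zero, mul_eq_zero]
      push_neg
      exact ⟨⟨h1, h2⟩, h3⟩

lemma casoratian : ∀ s, q1 (s+1) * qt s - q1 s * qt (s+1) = Polynomial.C (dd s)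
  | 0 => by
      show q1 1 * 0 - q1 0 * 1 = _
      simp [dd]
  | (s+1) => by
      have ih := casoratian s
      show q1 (s+2) * qt (s+1) - q1 (s+1) * (Polynomial.X * qt (s+1) + E (s+1) * qt s) = _
      rw [q1_rec s]
      have : (Polynomial.X * q1 (s+1) + E (s+1) * q1 s) * qt (s+1)
          - q1 (s+1) * (Polynomial.X * qt (s+1) + E (s+1) * qt s)
          = -(E (s+1)) * (q1 (s+1) * qt s - q1 s * qt (s+1)) := by ring
      rw [this, ih, E, bb_def, dd, map_neg, map_mul, map_mul]
      simp only [← Polynomial.C_mul, ← Polynomial.C_neg]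
      congr 1
      ring

/-- Cancellation: a monic polynomial dividing x·C m (m ≠ 0) divides x. -/
lemma dvd_of_dvd_mul_C {q x : B} {m : Polynomial ℂ} (hq : q.Monic) (hm : m ≠ 0)
    (h : q ∣ x * Polynomial.C m) : q ∣ x := by
  have hdiv := Polynomial.modByMonic_add_div x q
  rcases eq_or_ne (x %ₘ q) 0 with h0 | h0
  · rw [h0, zero_add] at hdiv
    exact ⟨_, hdiv.symm⟩
  · exfalso
    have hR : q ∣ (x %ₘ q) * Polynomial.C m := by
      have key : (x %ₘ q) * Polynomial.C m
          = x * Polynomial.C m - q * ((x /ₘ q) * Polynomial.C m) := by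
        linear_combination Polynomial.C m * hdiv
      rw [key]
      exact dvd_sub h (Dvd.intro _ rfl)
    have hdeg : ((x %ₘ q) * Polynomial.C m).degree < q.degree := by
      rw [Polynomial.degree_mul, Polynomial.degree_C hm, add_zero]
      exact Polynomial.degree_modByMonic_lt x hq
    have := Polynomial.eq_zero_of_dvd_of_degree_lt hR hdeg
    rcases mul_eq_zero.mp this with h' | h'
    · exact h0 h'
    · exact hm (by simpa using h')


lemma prime_bb (k : ℕ) : Prime (bb k) := by
  rw [bb_def, show (Polynomial.X + Polynomial.C ((-1:ℂ)^k*8))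
      = Polynomial.X - Polynomial.C (-((-1:ℂ)^k*8)) from by rw [map_neg, sub_neg_eq_add]]
  exact Polynomial.prime_C_iff.mpr (Polynomial.prime_X_sub_C _)

lemma bb_ne_zero (k : ℕ) : bb k ≠ 0 := by
  rw [bb_def]
  exact Polynomial.C_ne_zero.mpr (Polynomial.monic_X_add_C _).ne_zero

lemma syzygy (s : ℕ) {A Bp : B} (h : A * q1 (s+1) + Bp * q2 (s+1) = 0) :
    ∃ g : B, Bp = g * q1 (s+1) ∧ A = -(g * q2 (s+1)) := by
  set m : Polynomial ℂ := (Polynomial.X + Polynomial.C ((-1 : ℂ)^(s+1) * 8)) * dd s with hm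
  have hm0 : m ≠ 0 := mul_ne_zero (Polynomial.monic_X_add_C _).ne_zero (dd_ne_zero s)
  have bez : q1 (s+1) * (bb (s+1) * qt s) - q2 (s+1) * qt (s+1) = Polynomial.C m := by
    have cas := casoratian s
    rw [q2_succ s]
    calc q1 (s+1) * (bb (s+1) * qt s) - bb (s+1) * q1 s * qt (s+1)
        = bb (s+1) * (q1 (s+1) * qt s - q1 s * qt (s+1)) := by ring
      _ = bb (s+1) * Polynomial.C (dd s) := by rw [cas]
      _ = Polynomial.C m := by rw [bb_def, hm, ← map_mul]
  have hdvd : q1 (s+1) ∣ Bp * Polynomial.C m :=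
    ⟨Bp * (bb (s+1) * qt s) + A * qt (s+1), by linear_combination (-Bp) * bez - qt (s+1) * h⟩
  obtain ⟨g, hg⟩ := dvd_of_dvd_mul_C (q1_monic (s+1)) hm0 hdvd
  have hzero : (A + g * q2 (s+1)) * q1 (s+1) = 0 := by
    linear_combination h - q2 (s+1) * hg
  have := (mul_eq_zero.mp hzero).resolve_right (q1_ne_zero _)
  exact ⟨g, hg.trans (mul_comm _ _), eq_neg_of_add_eq_zero_left this⟩


lemma φ_R1 (s : ℕ) : φ (Rr s).1 = q1 s := rfl
lemma φ_R2 (s : ℕ) : φ (Rr s).2.1 = q2 s := rfl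

lemma mem_span_triple {a b c x : P} :
    x ∈ Ideal.span {a, b, c} ↔ ∃ u v w : P, x = u * a + v * b + w * c := by
  constructor
  · intro hx
    rw [Ideal.mem_span_insert] at hx
    obtain ⟨u, z, hz, rfl⟩ := hx
    rw [Ideal.mem_span_insert] at hz
    obtain ⟨v, z', hz', rfl⟩ := hz
    rw [Ideal.mem_span_singleton] at hz'
    obtain ⟨w, rfl⟩ := hz'
    exact ⟨u, v, w, by ring⟩
  · rintro ⟨u, v, w, rfl⟩
    refine Ideal.add_mem _ (Ideal.add_mem _ ?_ ?_) ?_ <;>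
      refine Ideal.mul_mem_left _ _ (Ideal.subset_span ?_)
    · exact Set.mem_insert _ _
    · exact Set.mem_insert_of_mem _ (Set.mem_insert _ _)
    · exact Set.mem_insert_of_mem _ (Set.mem_insert_of_mem _ rfl)

lemma R1_mem (s : ℕ) : (Rr s).1 ∈ Jr s :=
  Ideal.subset_span (Set.mem_insert _ _)
lemma R2_mem (s : ℕ) : (Rr s).2.1 ∈ Jr s :=
  Ideal.subset_span (Set.mem_insert_of_mem _ (Set.mem_insert _ _))
lemma R3_mem (s : ℕ) : (Rr s).2.2 ∈ Jr s :=
  Ideal.subset_span (Set.mem_insert_of_mem _ (Set.mem_insert_of_mem _ rfl))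

lemma R1_succ_mem (s : ℕ) : (Rr (s+1)).1 ∈ Jr s := by
  rw [Rr1_succ]
  exact Ideal.add_mem _ (Ideal.mul_mem_left _ _ (R1_mem s)) (Ideal.mul_mem_left _ _ (R2_mem s))

lemma R2_succ_mem (s : ℕ) : (Rr (s+1)).2.1 ∈ Jr s := by
  rw [Rr2_succ]
  exact Ideal.add_mem _ (Ideal.mul_mem_left _ _ (R1_mem s)) (Ideal.mul_mem_left _ _ (R3_mem s))

lemma Jr_zero : Jr 0 = ⊤ :=
  (Ideal.eq_top_iff_one _).mpr (Ideal.subset_span (Set.mem_insert _ _))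

/-- The key lemma: (J_{s+1} : γ) ⊆ J_s. -/
lemma L2 (s : ℕ) (p : P) (hp : X 2 * p ∈ Jr (s+1)) : p ∈ Jr s := by
  cases s with
  | zero => rw [Jr_zero]; trivial
  | succ t =>
      rw [Jr, mem_span_triple] at hp
      obtain ⟨w1, w2, w3, h⟩ := hp
      have hφ : φ w1 * q1 (t+2) + φ w2 * q2 (t+2) = 0 := by
        have h0 := congrArg φ h
        simp only [map_add, map_mul, φ_X2, zero_mul, φ_R3, mul_zero, add_zero, φ_R1, φ_R2] at h0
        exact h0.symm
      have he : (((t+1 : ℕ) : ℂ))^2 ≠ 0 := pow_ne_zero _ (Nat.cast_ne_zero.mpr (Nat.succ_ne_zero t))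
      have hsyz : (φ w1 * Polynomial.X + φ w2 * bb (t+2)) * q1 (t+1)
          + (φ w1 * Polynomial.C (Polynomial.C (((t+1 : ℕ) : ℂ)^2))) * q2 (t+1) = 0 := by
        rw [q1_succ (t+1), q2_succ (t+1)] at hφ
        linear_combination hφ
      obtain ⟨g, hB, hA⟩ := syzygy t hsyz
      have hCC : Polynomial.C (Polynomial.C (((t+1 : ℕ) : ℂ)^2))
          * Polynomial.C (Polynomial.C ((((t+1 : ℕ) : ℂ))^2)⁻¹) = 1 := by
        rw [← map_mul, ← map_mul, mul_inv_cancel₀ he, map_one, map_one]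
      have hφw1 : φ w1 = (Polynomial.C (Polynomial.C ((((t+1 : ℕ) : ℂ))^2)⁻¹) * g) * q1 (t+1) := by
        calc φ w1 = (φ w1 * Polynomial.C (Polynomial.C (((t+1 : ℕ) : ℂ)^2)))
              * Polynomial.C (Polynomial.C ((((t+1 : ℕ) : ℂ))^2)⁻¹) := by
              rw [mul_assoc, hCC, mul_one]
          _ = g * q1 (t+1) * Polynomial.C (Polynomial.C ((((t+1 : ℕ) : ℂ))^2)⁻¹) := by rw [hB]
          _ = _ := by ring
      have hgg2 : Polynomial.C (Polynomial.C (((t+1 : ℕ) : ℂ)^2))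
          * (Polynomial.C (Polynomial.C ((((t+1 : ℕ) : ℂ))^2)⁻¹) * g) = g := by
        rw [← mul_assoc, hCC, one_mul]
      have hw2bb : φ w2 * bb (t+2)
          = -((Polynomial.C (Polynomial.C ((((t+1 : ℕ) : ℂ))^2)⁻¹) * g) * q1 (t+2)) := by
        rw [q1_rec t, E]
        rw [q2_succ t] at hA
        linear_combination hA - Polynomial.X * hφw1 + (bb (t+1) * q1 t) * hgg2
      have hdvd : bb (t+2) ∣ (Polynomial.C (Polynomial.C ((((t+1 : ℕ) : ℂ))^2)⁻¹) * g) * q1 (t+2) :=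
        ⟨-(φ w2), by linear_combination hw2bb⟩
      rcases (prime_bb (t+2)).2.2 _ _ hdvd with hg2dvd | hq1dvd
      swap
      · rw [bb_def] at hq1dvd
        exact absurd hq1dvd (not_C_linear_dvd_q1 (t+2) _)
      obtain ⟨g3, hg3⟩ := hg2dvd
      have hφw2 : φ w2 = -(g3 * q1 (t+2)) := by
        apply mul_right_cancel₀ (bb_ne_zero (t+2))
        rw [hw2bb, hg3]; ring
      have hφw1' : φ w1 = (bb (t+2) * g3) * q1 (t+1) := by rw [hφw1, hg3]
      have hφlin : φ (X 1 + C ((-1:ℂ)^(t+2)*8)) = bb (t+2) := by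
        rw [map_add, φ_X1, φ_C, bb_def, Polynomial.C_add]
      have h1 : φ (w1 - (X 1 + C ((-1:ℂ)^(t+2)*8)) * (ι g3 * (Rr (t+1)).1)) = 0 := by
        rw [map_sub, map_mul, hφlin, map_mul, φ_ι, φ_R1, hφw1']
        ring
      obtain ⟨u1, hu1⟩ := eq_X2_mul_of_φ_eq_zero h1
      have h2 : φ (w2 + ι g3 * (Rr (t+2)).1) = 0 := by
        rw [map_add, map_mul, φ_ι, φ_R1, hφw2]; ring
      obtain ⟨u2, hu2⟩ := eq_X2_mul_of_φ_eq_zero h2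
      have hw1eq : w1 = X 2 * u1 + (X 1 + C ((-1:ℂ)^(t+2)*8)) * (ι g3 * (Rr (t+1)).1) :=
        sub_eq_iff_eq_add.mp hu1
      have hw2eq : w2 = X 2 * u2 - ι g3 * (Rr (t+2)).1 := eq_sub_of_add_eq hu2
      have key : X 2 * p = X 2 * (u1 * (Rr (t+2)).1 + u2 * (Rr (t+2)).2.1 + w3 * (Rr (t+1)).1
          - (C ((2 * ((t+1 : ℕ)) : ℂ) / (((t+1 : ℕ) : ℂ) + 1)) * ι g3 * (Rr t).1)
            * (Rr (t+2)).1) := by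
        rw [h, hw1eq, hw2eq]
        rw [Rr2_succ (t+1), Rr3_succ (t+1), Rr3_succ t]
        ring
      have hpz := mul_left_cancel₀ (MvPolynomial.X_ne_zero (R := ℂ) 2) key
      rw [hpz]
      refine Ideal.sub_mem _ (Ideal.add_mem _ (Ideal.add_mem _ ?_ ?_) ?_) ?_
      · exact Ideal.mul_mem_left _ _ (R1_succ_mem (t+1))
      · exact Ideal.mul_mem_left _ _ (R2_succ_mem (t+1))
      · exact Ideal.mul_mem_left _ _ (R1_mem (t+1))
      · exact Ideal.mul_mem_left _ _ (R1_succ_mem (t+1))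


lemma L1 (s : ℕ) {p : P} (hp : p ∈ Jr s) : X 2 * p ∈ Jr (s+1) := by
  rw [Jr, mem_span_triple] at hp
  obtain ⟨u, v, w, rfl⟩ := hp
  have e1 : X 2 * (Rr s).1 ∈ Jr (s+1) := by rw [← Rr3_succ]; exact R3_mem (s+1)
  have e2 : X 2 * (Rr s).2.1 ∈ Jr (s+1) := by
    cases s with
    | zero =>
        have h0 : (Rr 0).2.1 = 0 := rfl
        rw [h0, mul_zero]; exact Ideal.zero_mem _
    | succ k =>
        have he : ((((k+1 : ℕ) : ℂ))^2) ≠ 0 :=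
          pow_ne_zero _ (Nat.cast_ne_zero.mpr (Nat.succ_ne_zero k))
        have hCe : (C ((((k+1 : ℕ) : ℂ))^2)⁻¹ : P) * C ((((k+1 : ℕ) : ℂ))^2) = 1 := by
          rw [← map_mul, inv_mul_cancel₀ he, map_one]
        have hrep : X 2 * (Rr (k+1)).2.1
            = C ((((k+1 : ℕ) : ℂ))^2)⁻¹ * (X 2 * (Rr (k+2)).1)
              - C ((((k+1 : ℕ) : ℂ))^2)⁻¹ * (X 0 * (Rr (k+2)).2.2) := by
          rw [Rr1_succ (k+1), Rr3_succ (k+1)]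
          linear_combination (-(X 2 * (Rr (k+1)).2.1)) * hCe
        rw [hrep]
        exact Ideal.sub_mem _ (Ideal.mul_mem_left _ _ (Ideal.mul_mem_left _ _ (R1_mem (k+2))))
          (Ideal.mul_mem_left _ _ (Ideal.mul_mem_left _ _ (R3_mem (k+2))))
  have e3 : X 2 * (Rr s).2.2 ∈ Jr (s+1) := by
    cases s with
    | zero =>
        have h0 : (Rr 0).2.2 = 0 := rfl
        rw [h0, mul_zero]; exact Ideal.zero_mem _
    | succ k =>
        have hc : ((2 * ((k+1 : ℕ)) : ℂ) / (((k+1 : ℕ) : ℂ) + 1)) ≠ 0 := by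
          apply div_ne_zero
          · have : ((k+1 : ℕ) : ℂ) ≠ 0 := Nat.cast_ne_zero.mpr (Nat.succ_ne_zero k)
            push_cast
            intro hcon
            apply this
            push_cast
            linear_combination hcon / 2
          · have : (((k+1 : ℕ) : ℂ) + 1) = ((k+2 : ℕ) : ℂ) := by push_cast; ring
            rw [this]
            exact Nat.cast_ne_zero.mpr (by omega)
        have hCc : (C ((2 * ((k+1 : ℕ)) : ℂ) / (((k+1 : ℕ) : ℂ) + 1))⁻¹ : P)
            * C ((2 * ((k+1 : ℕ)) : ℂ) / (((k+1 : ℕ) : ℂ) + 1)) = 1 := by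
          rw [← map_mul, inv_mul_cancel₀ hc, map_one]
        have hrep : X 2 * (Rr (k+1)).2.2
            = C ((2 * ((k+1 : ℕ)) : ℂ) / (((k+1 : ℕ) : ℂ) + 1))⁻¹ * (X 2 * (Rr (k+2)).2.1)
              - C ((2 * ((k+1 : ℕ)) : ℂ) / (((k+1 : ℕ) : ℂ) + 1))⁻¹
                * ((X 1 + C ((-1 : ℂ) ^ (k + 2) * 8)) * (Rr (k+2)).2.2) := by
          rw [Rr2_succ (k+1), Rr3_succ (k+1)]
          linear_combination (-(X 2 * (Rr (k+1)).2.2)) * hCc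
        rw [hrep]
        exact Ideal.sub_mem _ (Ideal.mul_mem_left _ _ (Ideal.mul_mem_left _ _ (R2_mem (k+2))))
          (Ideal.mul_mem_left _ _ (Ideal.mul_mem_left _ _ (R3_mem (k+2))))
  have hsplit : X 2 * (u * (Rr s).1 + v * (Rr s).2.1 + w * (Rr s).2.2)
      = u * (X 2 * (Rr s).1) + v * (X 2 * (Rr s).2.1) + w * (X 2 * (Rr s).2.2) := by ring
  rw [hsplit]
  exact Ideal.add_mem _ (Ideal.add_mem _ (Ideal.mul_mem_left _ _ e1)
    (Ideal.mul_mem_left _ _ e2)) (Ideal.mul_mem_left _ _ e3)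

end Stmt12

/-- For every r ≥ 2, the kernel of the endomorphism of F_r = ℂ[α,β,γ]/J_r given by
multiplication by (the class of) γ² equals the image of the ideal J_{r−2} under the quotient
map ℂ[α,β,γ] → F_r. -/
theorem stmt12 (r : ℕ) (hr : 2 ≤ r) :
    {x : MvPolynomial (Fin 3) ℂ ⧸ Jr r | (Ideal.Quotient.mk (Jr r) (X 2)) ^ 2 * x = 0}
      = (Ideal.Quotient.mk (Jr r)) '' (Jr (r - 2)) := by
  obtain ⟨s, rfl⟩ : ∃ s, r = s + 2 := ⟨r - 2, by omega⟩
  have hs2 : s + 2 - 2 = s := by omega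
  ext x
  simp only [Set.mem_setOf_eq, Set.mem_image, hs2]
  constructor
  · intro hx
    obtain ⟨p, rfl⟩ := Ideal.Quotient.mk_surjective x
    have h0 : (Ideal.Quotient.mk (Jr (s+2))) (X 2 ^ 2 * p) = 0 := by
      rw [map_mul, map_pow]; exact hx
    rw [Ideal.Quotient.eq_zero_iff_mem] at h0
    have h1 : X 2 * (X 2 * p) ∈ Jr (s+2) := by
      rwa [show X 2 * (X 2 * p) = X 2 ^ 2 * p from by ring]
    exact ⟨p, Stmt12.L2 s p (Stmt12.L2 (s+1) _ h1), rfl⟩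
  · rintro ⟨p, hp, rfl⟩
    have h2 := Stmt12.L1 (s+1) (Stmt12.L1 s hp)
    show (Ideal.Quotient.mk _ (X 2))^2 * Ideal.Quotient.mk _ p = 0
    rw [← map_pow, ← map_mul, Ideal.Quotient.eq_zero_iff_mem,
      show (X 2 : MvPolynomial (Fin 3) ℂ)^2 * p = X 2 * (X 2 * p) from by ring]
    exact h2
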